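/- Let L be a first-order language, A a nonempty L-structure, and I a collection of subsets of A such that I is closed under subsets and under binary unions and ⋃I is all of A (an ideal over A covering A). Suppose that for each i ∈ I we are given a nonempty L-structure Bᵢ together with an injection fᵢ : i → Bᵢ such that the fragments of A and of Bᵢ given by i coincide, i.e.: for every relation symbol R of L and every tuple x of elements of i, R holds of x in A if and only if R holds of the image tuple fᵢ∘x in Bᵢ; and for every function symbol F of L and every tuple x of elements of i, if the value of F at x computed in A lies in i then the value of F at fᵢ∘x computed in Bᵢ equals fᵢ applied to that value, and conversely if the value of F at fᵢ∘x in Bᵢ lies in the range of fᵢ then the value of F at x in A lies in i and is mapped to it by fᵢ. Let D be an ultrafilter on I containing every upper cone {j ∈ I : i ⊆ j} for i ∈ I. Then A embeds isomorphically into the ultraproduct ∏_D Bᵢ. -/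

import Mathlib

open FirstOrder Language Structure

/-- If `(Bᵢ)_{i ∈ I}` is a system of nonempty structures coherent in `A`
(indexed by an ideal `I` of subsets covering `A`, each `Bᵢ` agreeing with `A` on the
fragment given by `i`), and `D` is an ultrafilter on `I` containing all upper cones,
then `A` embeds isomorphically into the ultraproduct `∏_D Bᵢ`. -/
theorem coherent_embeds_into_ultraproduct {L : FirstOrder.Language} {A : Type*}
    [L.Structure A] [Nonempty A]
    (I : Set (Set A))
    (hsub : ∀ i ∈ I, ∀ j, j ⊆ i → j ∈ I)
    (hunion : ∀ i ∈ I, ∀ j ∈ I, i ∪ j ∈ I)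
    (hcover : ⋃₀ I = Set.univ)
    (B : I → Type*) [∀ i, L.Structure (B i)] [∀ i, Nonempty (B i)]
    (f : ∀ i : I, Set.Elem (i : Set A) → B i)
    (hinj : ∀ i : I, Function.Injective (f i))
    (hrel : ∀ (i : I) (n : ℕ) (R : L.Relations n) (x : Fin n → Set.Elem (i : Set A)),
      RelMap R (fun k => (x k : A)) ↔ RelMap R (fun k => f i (x k)))
    (hfun : ∀ (i : I) (n : ℕ) (F : L.Functions n) (x : Fin n → Set.Elem (i : Set A)),
      (∀ h : funMap F (fun k => (x k : A)) ∈ (i : Set A),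
        funMap F (fun k => f i (x k)) = f i ⟨funMap F (fun k => (x k : A)), h⟩) ∧
      (∀ y : Set.Elem (i : Set A), funMap F (fun k => f i (x k)) = f i y →
        ∃ h : funMap F (fun k => (x k : A)) ∈ (i : Set A),
          f i ⟨funMap F (fun k => (x k : A)), h⟩ = f i y))
    (D : Ultrafilter I)
    (hD : ∀ i : I, {j : I | (i : Set A) ⊆ (j : Set A)} ∈ D) :
    Nonempty (A ↪[L] (D : Filter I).Product B) := by
  classical
  -- every finite set belongs to I
  have hsingle : ∀ a : A, {a} ∈ I := by
    intro a
    have : a ∈ ⋃₀ I := by rw [hcover]; trivial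
    obtain ⟨i, hi, hai⟩ := this
    exact hsub i hi {a} (by simpa using hai)
  have hfin : ∀ s : Set A, s.Finite → s ∈ I := by
    intro s hs
    refine Set.Finite.induction_on s hs ?_ ?_
    · obtain ⟨a⟩ := (inferInstance : Nonempty A)
      exact hsub {a} (hsingle a) ∅ (Set.empty_subset _)
    · intro a t _ _ ih
      have := hunion {a} (hsingle a) t ih
      rw [Set.insert_eq]
      exact this
  -- the approximating map
  set g : A → ∀ j : I, B j := fun a j =>
    if h : a ∈ (j : Set A) then f j ⟨a, h⟩ else Classical.arbitrary _ with hg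
  have hgmem : ∀ (a : A) (j : I) (h : a ∈ (j : Set A)), g a j = f j ⟨a, h⟩ := by
    intro a j h; simp [hg, h]
  -- injectivity
  have hginj : Function.Injective fun a => (↑(g a) : (D : Filter I).Product B) := by
    intro a b hab
    have hev : ∀ᶠ j in (D : Filter I), g a j = g b j := Quotient.exact' hab
    have hi : ({a, b} : Set A) ∈ I := hfin _ (Set.toFinite _)
    have hcone := hD ⟨{a, b}, hi⟩
    obtain ⟨j, hj1, hj2⟩ := ((D : Filter I).nonempty_of_mem (Filter.inter_mem hev hcone))
    have ha : a ∈ (j : Set A) := hj2 (by simp)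
    have hb : b ∈ (j : Set A) := hj2 (by simp)
    have : f j ⟨a, ha⟩ = f j ⟨b, hb⟩ := by
      rw [← hgmem a j ha, ← hgmem b j hb]; exact hj1
    exact Subtype.mk_eq_mk.1 (hinj j this)
  refine ⟨⟨⟨fun a => (↑(g a) : (D : Filter I).Product B), hginj⟩, ?_, ?_⟩⟩
  · -- functions
    intro n F x
    show (↑(g (funMap F x)) : (D : Filter I).Product B) =
      funMap F fun k => (↑(g (x k)) : (D : Filter I).Product B)
    rw [Ultraproduct.funMap_cast]
    apply Quotient.sound'
    have hi : (Set.range x ∪ {funMap F x} : Set A) ∈ I :=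
      hfin _ ((Set.finite_range x).union (Set.finite_singleton _))
    have hcone := hD ⟨_, hi⟩
    refine Filter.mem_of_superset hcone fun j hj => ?_
    have hx : ∀ k, x k ∈ (j : Set A) := fun k =>
      hj (Set.mem_union_left _ ⟨k, rfl⟩)
    have hv : funMap F x ∈ (j : Set A) := hj (Set.mem_union_right _ rfl)
    have hxk : (fun k => g (x k) j) = fun k => f j ⟨x k, hx k⟩ := by
      funext k; exact hgmem _ _ _
    have := (hfun j n F fun k => ⟨x k, hx k⟩).1
    simp only [Set.mem_setOf_eq]
    rw [hgmem _ _ hv, hxk]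
    exact (this hv).symm
  · -- relations
    intro n R x
    show RelMap R (fun k => (↑(g (x k)) : (D : Filter I).Product B)) ↔ RelMap R x
    have hcast : RelMap R (fun k => (↑(g (x k)) : (D : Filter I).Product B)) ↔
        ∀ᶠ j in (D : Filter I), RelMap R fun k => g (x k) j := by
      exact @relMap_quotient_mk' L _ _ (Ultraproduct.setoidPrestructure B D) n R
        fun k => g (x k)
    rw [hcast]
    have hi : (Set.range x : Set A) ∈ I := hfin _ (Set.finite_range x)
    have hcone := hD ⟨_, hi⟩
    have key : ∀ j : I, (Set.range x : Set A) ⊆ (j : Set A) →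
        (RelMap R (fun k => g (x k) j) ↔ RelMap R x) := by
      intro j hj
      have hx : ∀ k, x k ∈ (j : Set A) := fun k => hj ⟨k, rfl⟩
      have hxk : (fun k => g (x k) j) = fun k => f j ⟨x k, hx k⟩ := by
        funext k; exact hgmem _ _ _
      rw [hxk]
      exact ((hrel j n R fun k => ⟨x k, hx k⟩).symm)
    constructor
    · intro h
      obtain ⟨j, hj1, hj2⟩ := (D : Filter I).nonempty_of_mem (Filter.inter_mem h hcone)
      exact (key j hj2).1 hj1
    · intro h
      exact Filter.mem_of_superset hcone fun j hj => (key j hj).2 h
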